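/- Let p be prime and e ≥ 1, f ≥ 1 integers. Consider the free abelian group Z[Σ] on a set Σ = {σ_{τ,i} : τ ∈ Z/fZ, 1 ≤ i ≤ e}, and define for each (τ, i) with 2 ≤ i ≤ e the vector w_{τ,i} = σ_{τ,i−1} − σ_{τ,i}, and for i = 1 the vector w_{τ,1} = p·σ_{τ−1,e} − σ_{τ,1}. Define the minimal cone C^min ⊆ Q[Σ] as the set of Σ k_{τ,i}σ_{τ,i} with k_{τ,i+1} ≥ k_{τ,i} for 1 ≤ i < e and p·k_{τ,1} ≥ k_{τ−1,e} for all τ. Then: if k ∈ C^min ∩ Z[Σ], k_{σ} ≥ 0 for all σ, and if k_{τ₀,i₀} = 0 for some (τ₀,i₀), then k_σ = 0 for all σ. -/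
import Mathlib


/-- Diamond–Kassaei minimal cone (one cyclic block of size `f`, `e` columns):
if `k ∈ C^min ∩ ℤ[Σ]`, i.e. `k (τ, i+1) ≥ k (τ, i)` for `1 ≤ i < e` and
`p·k (τ, 1) ≥ k (τ−1, e)`, then all components are `≥ 0`, and if one
component vanishes then all vanish. -/
theorem stmt10 (p : ℕ) (hp : p.Prime) (e f : ℕ) (he : 1 ≤ e) (hf : 1 ≤ f)
    (k : ZMod f → ℕ → ℤ)
    (h1 : ∀ τ : ZMod f, ∀ i : ℕ, 1 ≤ i → i < e → k τ i ≤ k τ (i + 1))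
    (h2 : ∀ τ : ZMod f, k (τ - 1) e ≤ (p : ℤ) * k τ 1) :
    (∀ τ : ZMod f, ∀ i : ℕ, 1 ≤ i → i ≤ e → 0 ≤ k τ i) ∧
    (∀ τ₀ : ZMod f, ∀ i₀ : ℕ, 1 ≤ i₀ → i₀ ≤ e → k τ₀ i₀ = 0 →
      ∀ τ : ZMod f, ∀ i : ℕ, 1 ≤ i → i ≤ e → k τ i = 0) := by
  haveI : NeZero f := ⟨by omega⟩
  have hp2 : (2 : ℤ) ≤ (p : ℤ) := by exact_mod_cast hp.two_le
  -- monotonicity within a row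
  have mono : ∀ τ : ZMod f, ∀ i j : ℕ, 1 ≤ i → i ≤ j → j ≤ e → k τ i ≤ k τ j := by
    intro τ i j hi hij hje
    induction j with
    | zero => omega
    | succ j ih =>
      rcases Nat.eq_or_lt_of_le hij with h | h
      · rw [h]
      · have hij' : i ≤ j := Nat.lt_succ_iff.mp h
        exact le_trans (ih hij' (by omega)) (h1 τ j (by omega) (by omega))
  -- cyclic bound
  have key : ∀ τ : ZMod f, ∀ n : ℕ, k (τ - (n : ZMod f)) 1 ≤ (p : ℤ) ^ n * k τ 1 := by
    intro τ n
    induction n with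
    | zero => simp
    | succ n ih =>
      have hcast : ((n + 1 : ℕ) : ZMod f) = (n : ZMod f) + 1 := by push_cast; ring
      have h3 : k (τ - (n : ZMod f) - 1) 1 ≤ k (τ - (n : ZMod f) - 1) e :=
        mono _ 1 e le_rfl he le_rfl
      have h4 : k (τ - (n : ZMod f) - 1) e ≤ (p : ℤ) * k (τ - (n : ZMod f)) 1 :=
        h2 (τ - (n : ZMod f))
      have h5 : (p : ℤ) * k (τ - (n : ZMod f)) 1 ≤ (p : ℤ) * ((p : ℤ) ^ n * k τ 1) :=
        mul_le_mul_of_nonneg_left ih (by positivity)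
      calc k (τ - ((n + 1 : ℕ) : ZMod f)) 1
          = k (τ - (n : ZMod f) - 1) 1 := by rw [hcast, sub_sub]
        _ ≤ (p : ℤ) * ((p : ℤ) ^ n * k τ 1) := le_trans h3 (le_trans h4 h5)
        _ = (p : ℤ) ^ (n + 1) * k τ 1 := by ring
  -- nonnegativity of first column, then all
  have hpow : (2 : ℤ) ≤ (p : ℤ) ^ f := by
    calc (2 : ℤ) = 2 ^ 1 := by norm_num
      _ ≤ 2 ^ f := pow_le_pow_right₀ (by norm_num) hf
      _ ≤ (p : ℤ) ^ f := pow_le_pow_left₀ (by norm_num) hp2 f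
  have nonneg1 : ∀ τ : ZMod f, 0 ≤ k τ 1 := by
    intro τ
    have := key τ f
    rw [ZMod.natCast_self, sub_zero] at this
    nlinarith
  have nonneg : ∀ τ : ZMod f, ∀ i : ℕ, 1 ≤ i → i ≤ e → 0 ≤ k τ i := by
    intro τ i hi hie
    exact le_trans (nonneg1 τ) (mono τ 1 i le_rfl hi hie)
  refine ⟨nonneg, ?_⟩
  intro τ₀ i₀ hi₀ hi₀e hk0 τ i hi hie
  -- k τ₀ 1 = 0
  have h01 : k τ₀ 1 = 0 :=
    le_antisymm (hk0 ▸ mono τ₀ 1 i₀ le_rfl hi₀ hi₀e) (nonneg1 τ₀)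
  -- zero propagates backwards in the first column
  have zero1 : ∀ n : ℕ, k (τ₀ - (n : ZMod f)) 1 = 0 := by
    intro n
    induction n with
    | zero => simpa using h01
    | succ n ih =>
      have hcast : ((n + 1 : ℕ) : ZMod f) = (n : ZMod f) + 1 := by push_cast; ring
      have h4 : k (τ₀ - (n : ZMod f) - 1) e ≤ (p : ℤ) * k (τ₀ - (n : ZMod f)) 1 :=
        h2 (τ₀ - (n : ZMod f))
      rw [ih, mul_zero] at h4
      have h3 : k (τ₀ - (n : ZMod f) - 1) 1 ≤ 0 :=
        le_trans (mono _ 1 e le_rfl he le_rfl) h4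
      have := nonneg1 (τ₀ - (n : ZMod f) - 1)
      rw [hcast, ← sub_sub]
      omega
  -- now conclude for arbitrary τ, i
  obtain ⟨n, hn⟩ := ZMod.natCast_zmod_surjective (τ₀ - (τ + 1))
  have hτ1 : τ₀ - (n : ZMod f) = τ + 1 := by rw [hn]; ring
  have h4 : k (τ + 1 - 1) e ≤ (p : ℤ) * k (τ + 1) 1 := h2 (τ + 1)
  have hτ : τ + 1 - 1 = τ := by ring
  rw [hτ, ← hτ1, zero1 n, mul_zero] at h4
  have hke : k τ e = 0 := le_antisymm h4 (nonneg τ e he le_rfl)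
  exact le_antisymm (hke ▸ mono τ i e hi hie le_rfl) (nonneg τ i hi hie)
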